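/- In K(I P(1,2)) ⊗ ℂ, identified with (ℂ[χ]/⟨(χ−1)(χ²−1)⟩) ⊕ (ℂ[χ]/⟨χ²−1⟩) with generators 1_1 and 1_{−1}, the localized orbifold product of the twisted-sector identity with itself is 1_{−1} ⋆_{LO} 1_{−1} = ((1+χ)²·e(χ) + (1−χ)²)/4 · 1_1, where e(χ) = 1 − χ⁻¹, and this product makes the module into a commutative associative ring with identity 1_1. -/

import Mathlib

open Polynomial

/-- `ℂ[χ]/⟨(χ−1)(χ²−1)⟩`, the K-theory (⊗ℂ) of the untwisted sector of `P(1,2)`. -/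
noncomputable abbrev KA12 : Type :=
  Polynomial ℂ ⧸ Ideal.span
    ({(Polynomial.X - 1) * (Polynomial.X ^ 2 - 1)} : Set (Polynomial ℂ))

/-- `ℂ[χ]/⟨χ²−1⟩`, the K-theory (⊗ℂ) of the twisted sector `𝔅μ₂` of `P(1,2)`. -/
noncomputable abbrev KB12 : Type :=
  Polynomial ℂ ⧸ Ideal.span ({Polynomial.X ^ 2 - 1} : Set (Polynomial ℂ))

noncomputable def mkA12 : Polynomial ℂ →+* KA12 := Ideal.Quotient.mk _
noncomputable def mkB12 : Polynomial ℂ →+* KB12 := Ideal.Quotient.mk _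

/-- `K(I P(1,2)) ⊗ ℂ = A·1₁ ⊕ B·1_{−1}`. -/
noncomputable abbrev KM12 : Type := KA12 × KB12

/-- The localized orbifold product on `K(I P(1,2)) ⊗ ℂ`, extended by the
projection formula from the table `1₁` = identity and
`1_{−1} ⋆ 1_{−1} = Q·1₁`, via the restriction `π : A → B` and the
pushforward `j : B → A` (characterized by `j(p) = p·Q`). -/
noncomputable def kmul12 (π : KA12 →+* KB12) (j : KB12 →ₗ[ℂ] KA12)
    (x y : KM12) : KM12 :=
  (x.1 * y.1 + j (x.2 * y.2), π x.1 * y.2 + x.2 * π y.1)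

noncomputable def chiInv12 : KA12 := mkA12 (-X^2 + X + 1)
noncomputable def Q12 : KA12 :=
  (1 / 4 : ℂ) • ((1 + mkA12 X) ^ 2 * (1 - chiInv12) + (1 - mkA12 X) ^ 2)

lemma mkA12_eq_zero {p : Polynomial ℂ} (q : Polynomial ℂ)
    (h : p = (X - 1) * (X ^ 2 - 1) * q) : mkA12 p = 0 := by
  rw [show mkA12 p = Ideal.Quotient.mk _ p from rfl, Ideal.Quotient.eq_zero_iff_mem]
  exact Ideal.mem_span_singleton'.mpr ⟨q, by rw [h]; ring⟩

noncomputable def π12 : KA12 →+* KB12 :=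
  Ideal.Quotient.factor (by
    rw [Ideal.span_le, Set.singleton_subset_iff]
    exact Ideal.mem_span_singleton'.mpr ⟨X - 1, rfl⟩)

lemma π12_mk (p : Polynomial ℂ) : π12 (mkA12 p) = mkB12 p := rfl

lemma Q12_kill : mkA12 (X ^ 2 - 1) * Q12 = 0 := by
  have h1 : (1 : KA12) - chiInv12 = mkA12 (X^2 - X) := by
    rw [chiInv12, ← map_one mkA12, ← map_sub]; ring_nf
  rw [Q12, h1, mul_smul_comm]
  rw [show (1 + mkA12 X) = mkA12 (1 + X) by rw [map_add, map_one]]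
  rw [show (1 - mkA12 X) = mkA12 (1 - X) by rw [map_sub, map_one]]
  rw [← map_pow, ← map_pow, ← map_mul, ← map_add, ← map_mul]
  rw [mkA12_eq_zero (X*(1+X)^2 + (X-1)) (by ring), smul_zero]

noncomputable def j12 : KB12 →ₗ[ℂ] KA12 :=
  Submodule.liftQ ((Ideal.span ({X ^ 2 - 1} : Set (Polynomial ℂ))).restrictScalars ℂ)
    ((LinearMap.mulRight ℂ Q12).comp
      (Ideal.Quotient.mkₐ ℂ (Ideal.span
        ({(X - 1) * (X ^ 2 - 1)} : Set (Polynomial ℂ)))).toLinearMap)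
    (by
      intro p hp
      obtain ⟨q, hq⟩ := Ideal.mem_span_singleton'.mp hp
      simp only [LinearMap.mem_ker, LinearMap.comp_apply, LinearMap.mulRight_apply]
      have : (Ideal.Quotient.mkₐ ℂ _).toLinearMap p = mkA12 p := rfl
      rw [this, ← hq, map_mul, mul_assoc, Q12_kill, mul_zero])

lemma j12_mk (p : Polynomial ℂ) : j12 (mkB12 p) = mkA12 p * Q12 := rfl

lemma chi_mul_chiInv : mkA12 X * chiInv12 = 1 := by
  rw [chiInv12, ← map_mul, ← map_one mkA12]
  rw [← sub_eq_zero, ← map_sub]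
  exact mkA12_eq_zero (-1) (by ring)

lemma surjA : Function.Surjective mkA12 := Ideal.Quotient.mk_surjective
lemma surjB : Function.Surjective mkB12 := Ideal.Quotient.mk_surjective

/-- In `K(I P(1,2)) ⊗ ℂ`, the localized orbifold product satisfies
`1_{−1} ⋆ 1_{−1} = ((1+χ)²·e(χ) + (1−χ)²)/4 · 1₁` with `e(χ) = 1 − χ⁻¹`, and it
makes the module into a commutative, associative ring with identity `1₁`. -/
theorem localized_product_P12_ring :
    ∃ (π : KA12 →+* KB12) (j : KB12 →ₗ[ℂ] KA12) (χinv : KA12),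
      (∀ p : Polynomial ℂ, π (mkA12 p) = mkB12 p) ∧
      (mkA12 Polynomial.X * χinv = 1) ∧
      (letI χ : KA12 := mkA12 Polynomial.X
       letI Q : KA12 :=
         (1 / 4 : ℂ) • ((1 + χ) ^ 2 * (1 - χinv) + (1 - χ) ^ 2)
       (∀ p : Polynomial ℂ, j (mkB12 p) = mkA12 p * Q) ∧
       (kmul12 π j ((0 : KA12), (1 : KB12)) ((0 : KA12), (1 : KB12))
          = (Q, (0 : KB12)))) ∧
      (∀ x y : KM12, kmul12 π j x y = kmul12 π j y x) ∧
      (∀ x y z : KM12,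
        kmul12 π j (kmul12 π j x y) z = kmul12 π j x (kmul12 π j y z)) ∧
      (∀ x : KM12, kmul12 π j ((1 : KA12), (0 : KB12)) x = x) := by
  refine ⟨π12, j12, chiInv12, π12_mk, chi_mul_chiInv, ⟨j12_mk, ?_⟩, ?_, ?_, ?_⟩
  · show (0 * 0 + j12 (1 * 1), π12 0 * 1 + 1 * π12 0) = (Q12, 0)
    have h1 : j12 1 = Q12 := by rw [← map_one mkB12, j12_mk, map_one, one_mul]
    simp [h1]
  · intro x y
    show (_, _) = (_, _)
    refine Prod.ext ?_ ?_
    · show x.1 * y.1 + j12 (x.2 * y.2) = y.1 * x.1 + j12 (y.2 * x.2)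
      rw [mul_comm x.1, mul_comm x.2]
    · show π12 x.1 * y.2 + x.2 * π12 y.1 = π12 y.1 * x.2 + y.2 * π12 x.1
      ring
  · intro x y z
    obtain ⟨a1, ha1⟩ := surjA x.1; obtain ⟨a2, ha2⟩ := surjB x.2
    obtain ⟨b1, hb1⟩ := surjA y.1; obtain ⟨b2, hb2⟩ := surjB y.2
    obtain ⟨c1, hc1⟩ := surjA z.1; obtain ⟨c2, hc2⟩ := surjB z.2
    simp only [kmul12, ← ha1, ← ha2, ← hb1, ← hb2, ← hc1, ← hc2, π12_mk]
    simp only [← map_mul, ← map_add]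
    simp only [j12_mk]
    simp only [map_mul, map_add, π12_mk]
    exact Prod.ext (by ring) (by ring)
  · intro x
    show (1 * x.1 + j12 (0 * x.2), π12 1 * x.2 + 0 * π12 x.1) = x
    simp
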